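/- Let A(X) be an acceptable subspace of C_b(X). Then: (i) there exists h ∈ A(X) with h(x) > 0 for every x ∈ X; (ii) for every lower semicontinuous function u : X → [0,∞) there exists a sequence (g_k) of nonnegative elements of A(X) increasing pointwise to u. -/

import Mathlib

open MeasureTheory Filter Topology BoundedContinuousFunction ENNReal NNReal

noncomputable section

namespace AMPaper

variable (X : Type*) [TopologicalSpace X] [MeasurableSpace X]

/-- The topology `τ_b` on the space of finite nonnegative Borel measures:
the weak topology induced by the pairings `μ ↦ ∫ g dμ`, `g ∈ C_b(X)`. -/
def taub : TopologicalSpace (FiniteMeasure X) :=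
  ⨅ g : X →ᵇ ℝ,
    TopologicalSpace.induced (fun μ : FiniteMeasure X => ∫ x, g x ∂(μ : Measure X)) inferInstance

/-- The topology `τ_A` induced by the pairings with functions from `A ⊆ C_b(X)`. -/
def tauA (A : Set (X →ᵇ ℝ)) : TopologicalSpace (FiniteMeasure X) :=
  ⨅ g ∈ A,
    TopologicalSpace.induced (fun μ : FiniteMeasure X => ∫ x, g x ∂(μ : Measure X)) inferInstance

variable {X}

/-- A closed linear sublattice of `C_b(X)`. -/
structure IsClosedSublattice (A : Set (X →ᵇ ℝ)) : Prop where
  isClosed : IsClosed A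
  zero_mem : (0 : X →ᵇ ℝ) ∈ A
  add_mem : ∀ ⦃f g : X →ᵇ ℝ⦄, f ∈ A → g ∈ A → f + g ∈ A
  smul_mem : ∀ (c : ℝ) ⦃f : X →ᵇ ℝ⦄, f ∈ A → c • f ∈ A
  sup_mem : ∀ ⦃f g h : X →ᵇ ℝ⦄, f ∈ A → g ∈ A → (∀ x, h x = max (f x) (g x)) → h ∈ A
  inf_mem : ∀ ⦃f g h : X →ᵇ ℝ⦄, f ∈ A → g ∈ A → (∀ x, h x = min (f x) (g x)) → h ∈ A

/-- An acceptable subspace of `C_b(X)`: a closed linear sublattice satisfying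
the separation property (A2). -/
structure IsAcceptable (A : Set (X →ᵇ ℝ)) extends IsClosedSublattice A : Prop where
  sep : ∀ F : Set X, IsClosed F → ∀ x ∉ F, ∃ g ∈ A,
    (∀ y, 0 ≤ g y) ∧ (∀ y, g y ≤ 1) ∧ g x = 1 ∧ ∀ y ∈ F, g y = 0

/-- A lower semicontinuous `ρ : X → [0,∞]` is admissible for `E` if `∫ ρ dμ ≥ 1` for all `μ ∈ E`. -/
def AdmissibleFun (ρ : X → ℝ≥0∞) (E : Set (FiniteMeasure X)) : Prop :=
  LowerSemicontinuous ρ ∧ ∀ μ ∈ E, 1 ≤ ∫⁻ x, ρ x ∂(μ : Measure X)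

/-- The `M_p` modulus of a family of measures. -/
def Mmod (p : ℝ) (m : Measure X) (E : Set (FiniteMeasure X)) : ℝ≥0∞ :=
  ⨅ (ρ : X → ℝ≥0∞) (_ : AdmissibleFun ρ E), ∫⁻ x, ρ x ^ p ∂m

/-- The continuous modulus `M_{p,c}^A`, with test functions nonnegative elements of `A`. -/
def McMod (p : ℝ) (A : Set (X →ᵇ ℝ)) (m : Measure X) (E : Set (FiniteMeasure X)) : ℝ≥0∞ :=
  ⨅ (g : X →ᵇ ℝ) (_ : g ∈ A ∧ (∀ x, 0 ≤ g x) ∧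
      ∀ μ ∈ E, 1 ≤ ∫⁻ x, ENNReal.ofReal (g x) ∂(μ : Measure X)),
    ∫⁻ x, ENNReal.ofReal (g x) ^ p ∂m

/-- A sequence of lower semicontinuous functions `ρ_j : X → [0,∞]` is an admissible sequence
for `E` if `liminf_j ∫ ρ_j dμ ≥ 1` for all `μ ∈ E`. -/
def AdmissibleSeq (ρ : ℕ → X → ℝ≥0∞) (E : Set (FiniteMeasure X)) : Prop :=
  (∀ j, LowerSemicontinuous (ρ j)) ∧
    ∀ μ ∈ E, 1 ≤ Filter.liminf (fun j => ∫⁻ x, ρ j x ∂(μ : Measure X)) Filter.atTop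

/-- The approximation modulus `AM_p` of a family of measures. -/
def AMmod (p : ℝ) (m : Measure X) (E : Set (FiniteMeasure X)) : ℝ≥0∞ :=
  ⨅ (ρ : ℕ → X → ℝ≥0∞) (_ : AdmissibleSeq ρ E),
    Filter.liminf (fun j => ∫⁻ x, ρ j x ^ p ∂m) Filter.atTop

/-- The continuous approximation modulus `AM_{p,c}^A`. -/
def AMcMod (p : ℝ) (A : Set (X →ᵇ ℝ)) (m : Measure X) (E : Set (FiniteMeasure X)) : ℝ≥0∞ :=
  ⨅ (g : ℕ → X →ᵇ ℝ) (_ : (∀ j, g j ∈ A ∧ ∀ x, 0 ≤ g j x) ∧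
      ∀ μ ∈ E, 1 ≤ Filter.liminf
        (fun j => ∫⁻ x, ENNReal.ofReal (g j x) ∂(μ : Measure X)) Filter.atTop),
    Filter.liminf (fun j => ∫⁻ x, ENNReal.ofReal (g j x) ^ p ∂m) Filter.atTop

/-- The `L^q(m)`-norm of a function `f : X → [0,∞]`. -/
def lqNorm (q : ℝ≥0∞) (m : Measure X) (f : X → ℝ≥0∞) : ℝ≥0∞ :=
  if q = ∞ then essSup f m else (∫⁻ x, f x ^ q.toReal ∂m) ^ (1 / q.toReal)

variable (X) in
/-- The `p`-content (depending on `p` only through the conjugate exponent `q`):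
the supremum of the outer measures `η*(E)` over all plans `η` — finite Borel measures on
`(M^+(X), τ_b)` — whose barycenter `η^#` is absolutely continuous w.r.t. `m` with density
of `L^q(m)`-norm at most `1`. -/
def Ct (q : ℝ≥0∞) (m : Measure X) (E : Set (FiniteMeasure X)) : ℝ≥0∞ :=
  ⨆ (η : @Measure (FiniteMeasure X) (@borel (FiniteMeasure X) (taub X)))
    (_ : η Set.univ < ∞ ∧ ∃ f : X → ℝ≥0∞, Measurable f ∧
      (∀ B : Set X, MeasurableSet B → (∫⁻ μ, (μ : Measure X) B ∂η) = ∫⁻ x in B, f x ∂m) ∧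
      lqNorm q m f ≤ 1),
    η E


section Aux

variable {X : Type*} [TopologicalSpace X] [PolishSpace X]

/-- Step lemma: for `q > 0` and `δ > 0`, a countable family of elements of `A` lying below `u`
that nearly attains the level `q` wherever `u > q`. -/
lemma exists_countable_step {A : Set (X →ᵇ ℝ)} (hA : IsAcceptable A) {u : X → ℝ}
    (hu : LowerSemicontinuous u) (hu0 : ∀ x, 0 ≤ u x)
    (q : ℝ) (hq : 0 < q) (δ : ℝ) (hδ : 0 < δ) :
    ∃ S : Set (X →ᵇ ℝ), S.Countable ∧
      (∀ f ∈ S, f ∈ A ∧ (∀ y, 0 ≤ f y) ∧ (∀ y, f y ≤ u y)) ∧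
      ∀ x, q < u x → ∃ f ∈ S, q * (1 - δ) < f x := by
  classical
  have hVopen : IsOpen {y : X | q < u y} := by
    have := lowerSemicontinuous_iff_isOpen_preimage.1 hu q
    simpa [Set.preimage, Set.Ioi] using this
  have hFclosed : IsClosed {y : X | q < u y}ᶜ := hVopen.isClosed_compl
  have H : ∀ i : {x : X // q < u x}, ∃ g ∈ A, (∀ y, 0 ≤ g y) ∧ (∀ y, g y ≤ 1) ∧
      g (i : X) = 1 ∧ ∀ y ∈ {y : X | q < u y}ᶜ, g y = 0 := by
    intro i
    exact hA.sep _ hFclosed i (by simp only [Set.mem_compl_iff, Set.mem_setOf_eq, not_not]; exact i.2)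
  choose g hgA hg0 hg1 hgx hgF using H
  set s : {x : X // q < u x} → Set X := fun i => {y | 1 - δ < g i y} with hs
  have hsopen : ∀ i, IsOpen (s i) := fun i => isOpen_lt continuous_const (g i).continuous
  obtain ⟨T, hTc, hTU⟩ := TopologicalSpace.isOpen_iUnion_countable s hsopen
  refine ⟨(fun i => q • g i) '' T, hTc.image _, ?_, ?_⟩
  · rintro f ⟨i, _, rfl⟩
    refine ⟨hA.smul_mem q (hgA i), ?_, ?_⟩
    · intro y
      have : (q • g i) y = q * g i y := by simp
      rw [this]
      exact mul_nonneg hq.le (hg0 i y)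
    · intro y
      have hval : (q • g i) y = q * g i y := by simp
      rw [hval]
      by_cases hy : q < u y
      · calc q * g i y ≤ q * 1 := by
              exact mul_le_mul_of_nonneg_left (hg1 i y) hq.le
          _ = q := mul_one q
          _ ≤ u y := hy.le
      · have : g i y = 0 := hgF i y (by simpa using hy)
        rw [this, mul_zero]
        exact hu0 y
  · intro x hx
    have hxmem : x ∈ ⋃ i, s i := Set.mem_iUnion.2 ⟨⟨x, hx⟩, by
      simp only [hs, Set.mem_setOf_eq, hgx ⟨x, hx⟩]; linarith⟩
    rw [← hTU] at hxmem
    obtain ⟨i, hiT, hxi⟩ := Set.mem_iUnion₂.1 hxmem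
    refine ⟨q • g i, ⟨i, hiT, rfl⟩, ?_⟩
    have hval : (q • g i) x = q * g i x := by simp
    rw [hval]
    have : 1 - δ < g i x := hxi
    exact mul_lt_mul_of_pos_left this hq

/-- A countable family of nonnegative elements of `A` below `u` whose pointwise supremum is `u`. -/
lemma exists_countable_family {A : Set (X →ᵇ ℝ)} (hA : IsAcceptable A) {u : X → ℝ}
    (hu : LowerSemicontinuous u) (hu0 : ∀ x, 0 ≤ u x) :
    ∃ f : ℕ → X →ᵇ ℝ, (∀ n, f n ∈ A) ∧ (∀ n y, 0 ≤ f n y) ∧ (∀ n y, f n y ≤ u y) ∧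
      ∀ x, ∀ c, c < u x → ∃ n, c < f n x := by
  classical
  have H : ∀ p : ℚ × ℕ, ∃ S : Set (X →ᵇ ℝ), S.Countable ∧
      (∀ f ∈ S, f ∈ A ∧ (∀ y, 0 ≤ f y) ∧ (∀ y, f y ≤ u y)) ∧
      (0 < (p.1 : ℝ) → ∀ x, (p.1 : ℝ) < u x →
        ∃ f ∈ S, (p.1 : ℝ) * (1 - 1 / (p.2 + 1)) < f x) := by
    intro p
    by_cases hp : 0 < (p.1 : ℝ)
    · obtain ⟨S, h1, h2, h3⟩ := exists_countable_step hA hu hu0 (p.1 : ℝ) hp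
        (1 / (p.2 + 1)) (by positivity)
      exact ⟨S, h1, h2, fun _ => h3⟩
    · exact ⟨∅, Set.countable_empty, by simp, fun h => absurd h hp⟩
  choose S hSc hSmem hScov using H
  set D : Set (X →ᵇ ℝ) := insert 0 (⋃ p, S p) with hD
  have hDc : D.Countable := (Set.countable_iUnion hSc).insert 0
  have hDne : D.Nonempty := ⟨0, Set.mem_insert _ _⟩
  obtain ⟨f, hf⟩ := hDc.exists_eq_range hDne
  have hmem : ∀ n, f n ∈ D := fun n => hf ▸ Set.mem_range_self n
  have hprops : ∀ n, f n ∈ A ∧ (∀ y, 0 ≤ f n y) ∧ (∀ y, f n y ≤ u y) := by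
    intro n
    rcases hmem n with h0 | hS
    · rw [h0]
      exact ⟨hA.zero_mem, fun y => by simp, fun y => by simpa using hu0 y⟩
    · obtain ⟨_, ⟨p, rfl⟩, hp⟩ := hS
      exact hSmem p _ hp
  refine ⟨f, fun n => (hprops n).1, fun n => (hprops n).2.1, fun n => (hprops n).2.2, ?_⟩
  intro x c hc
  by_cases hc0 : c < 0
  · have : (0 : X →ᵇ ℝ) ∈ Set.range f := hf ▸ Set.mem_insert _ _
    obtain ⟨n, hn⟩ := this
    exact ⟨n, by rw [hn]; simpa using hc0⟩
  push_neg at hc0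
  obtain ⟨q, hcq, hqu⟩ := exists_rat_btwn hc
  have hq0 : (0 : ℝ) < q := lt_of_le_of_lt hc0 hcq
  have hqc : (0 : ℝ) < (q : ℝ) - c := by linarith
  obtain ⟨m, hm⟩ := exists_nat_gt ((q : ℝ) / ((q : ℝ) - c))
  have hm1 : (q : ℝ) / ((q : ℝ) - c) < (m : ℝ) + 1 := hm.trans (by linarith)
  have hkey : (q : ℝ) / ((m : ℝ) + 1) < (q : ℝ) - c := by
    rw [div_lt_iff₀ hqc] at hm1
    rw [div_lt_iff₀ (by positivity : (0:ℝ) < (m : ℝ) + 1)]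
    linarith
  have hcle : c < (q : ℝ) * (1 - 1 / ((m : ℝ) + 1)) := by
    have : (q : ℝ) * (1 - 1 / ((m : ℝ) + 1)) = (q : ℝ) - (q : ℝ) / ((m : ℝ) + 1) := by
      rw [mul_sub, mul_one, mul_one_div]
    rw [this]
    linarith
  obtain ⟨f', hf'S, hf'x⟩ := hScov (q, m) hq0 x hqu
  have : f' ∈ Set.range f := hf ▸ Set.mem_insert_of_mem _ (Set.mem_iUnion.2 ⟨(q, m), hf'S⟩)
  obtain ⟨n, rfl⟩ := this
  exact ⟨n, hcle.trans (by exact_mod_cast hf'x)⟩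

end Aux

set_option maxHeartbeats 1600000 in
theorem stmt1 {X : Type*} [TopologicalSpace X] [PolishSpace X]
    (A : Set (X →ᵇ ℝ)) (hA : IsAcceptable A) :
    (∃ h ∈ A, ∀ x, 0 < h x) ∧
    (∀ u : X → ℝ, LowerSemicontinuous u → (∀ x, 0 ≤ u x) →
      ∃ g : ℕ → X →ᵇ ℝ, (∀ k, g k ∈ A) ∧ (∀ k x, 0 ≤ g k x) ∧
        (∀ x, Monotone fun k => g k x) ∧ ∀ x, Tendsto (fun k => g k x) atTop (𝓝 (u x))) := by
  classical
  constructor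
  · -- Part (i): a strictly positive element of A
    by_cases hX : Nonempty X
    swap
    · exact ⟨0, hA.zero_mem, fun x => (hX ⟨x⟩).elim⟩
    have H : ∀ x : X, ∃ g ∈ A, (∀ y, 0 ≤ g y) ∧ (∀ y, g y ≤ 1) ∧ g x = 1 ∧
        ∀ y ∈ (∅ : Set X), g y = 0 :=
      fun x => hA.sep ∅ isClosed_empty x (Set.notMem_empty x)
    choose g hgA hg0 hg1 hgx _ using H
    set s : X → Set X := fun x => {y | 1 / 2 < g x y} with hs
    have hsopen : ∀ x, IsOpen (s x) := fun x => isOpen_lt continuous_const (g x).continuous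
    obtain ⟨T, hTc, hTU⟩ := TopologicalSpace.isOpen_iUnion_countable s hsopen
    have hTcov : ∀ y : X, ∃ x ∈ T, y ∈ s x := by
      intro y
      have : y ∈ ⋃ x, s x := Set.mem_iUnion.2 ⟨y, by
        simp only [hs, Set.mem_setOf_eq, hgx y]; norm_num⟩
      rw [← hTU] at this
      obtain ⟨x, hxT, hyx⟩ := Set.mem_iUnion₂.1 this
      exact ⟨x, hxT, hyx⟩
    have hTne : T.Nonempty := by
      obtain ⟨y⟩ := hX
      obtain ⟨x, hxT, _⟩ := hTcov y
      exact ⟨x, hxT⟩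
    obtain ⟨e, hTe⟩ := hTc.exists_eq_range hTne
    set F : ℕ → X →ᵇ ℝ := fun n => ((1 : ℝ) / 2) ^ (n + 1) • g (e n) with hF
    have hgnorm : ∀ x : X, ‖g x‖ ≤ 1 := by
      intro x
      refine (BoundedContinuousFunction.norm_le zero_le_one).2 fun y => ?_
      rw [Real.norm_eq_abs, abs_of_nonneg (hg0 x y)]
      exact hg1 x y
    have hFnorm : ∀ n, ‖F n‖ ≤ ((1 : ℝ) / 2) ^ n := by
      intro n
      have hFn : F n = ((1 : ℝ) / 2) ^ (n + 1) • g (e n) := rfl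
      rw [hFn]
      calc ‖((1 : ℝ) / 2) ^ (n + 1) • g (e n)‖
          ≤ ‖((1 : ℝ) / 2) ^ (n + 1)‖ * ‖g (e n)‖ := by exact norm_smul_le (((1 : ℝ) / 2) ^ (n + 1)) (g (e n))
        _ ≤ ((1 : ℝ) / 2) ^ (n + 1) * 1 := by
            rw [Real.norm_eq_abs, abs_of_nonneg (by positivity : (0:ℝ) ≤ ((1:ℝ)/2)^(n+1))]
            exact mul_le_mul_of_nonneg_left (hgnorm (e n)) (by positivity)
        _ = ((1 : ℝ) / 2) ^ (n + 1) := mul_one _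
        _ ≤ ((1 : ℝ) / 2) ^ n := by
            apply pow_le_pow_of_le_one (by norm_num) (by norm_num)
            omega
    have hsumF : Summable F := by
      apply Summable.of_norm
      exact Summable.of_nonneg_of_le (fun n => norm_nonneg _) hFnorm summable_geometric_two
    set h : X →ᵇ ℝ := ∑' n, F n with hh
    have hhs : HasSum F h := hsumF.hasSum
    have hhA : h ∈ A := by
      refine hA.isClosed.mem_of_tendsto hhs (Filter.Eventually.of_forall fun t => ?_)
      exact Finset.sum_induction F (· ∈ A) (fun a b ha hb => hA.add_mem ha hb) hA.zero_mem
        (fun i _ => hA.smul_mem _ (hgA (e i)))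
    refine ⟨h, hhA, fun x => ?_⟩
    have hhsx : HasSum (fun n => F n x) (h x) := by
      have := hhs.mapL (BoundedContinuousFunction.evalCLM ℝ x)
      simpa using this
    obtain ⟨i, hiT, hxi⟩ := hTcov x
    rw [hTe] at hiT
    obtain ⟨n, rfl⟩ := hiT
    have hFn : ((1 : ℝ) / 2) ^ (n + 2) < F n x := by
      rw [hF]
      have : (((1 : ℝ) / 2) ^ (n + 1) • g (e n)) x = ((1 : ℝ) / 2) ^ (n + 1) * g (e n) x := by
        simp
      rw [this, pow_succ]
      have h2 : (1 : ℝ) / 2 < g (e n) x := hxi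
      have hpos : (0 : ℝ) < ((1 : ℝ) / 2) ^ (n + 1) := by positivity
      calc ((1 : ℝ) / 2) ^ (n + 1) * (1 / 2) < ((1 : ℝ) / 2) ^ (n + 1) * g (e n) x :=
        mul_lt_mul_of_pos_left h2 hpos
        _ = _ := rfl
    have hle : F n x ≤ h x := by
      have := sum_le_hasSum {n} (fun j _ => by
        have : (F j) x = ((1 : ℝ) / 2) ^ (j + 1) * g (e j) x := by simp [hF]
        rw [this]
        exact mul_nonneg (by positivity) (hg0 (e j) x)) hhsx
      simpa using this
    have : (0 : ℝ) < ((1 : ℝ) / 2) ^ (n + 2) := by positivity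
    linarith
  · -- Part (ii): monotone approximation of lower semicontinuous functions
    intro u hu hu0
    obtain ⟨f, hfA, hf0, hfu, hfd⟩ := exists_countable_family hA hu hu0
    set g : ℕ → X →ᵇ ℝ := fun k => Nat.rec (f 0) (fun k gk => gk ⊔ f (k + 1)) k with hg
    have hgsucc : ∀ k, g (k + 1) = g k ⊔ f (k + 1) := fun k => rfl
    have hsup_apply : ∀ (a b : X →ᵇ ℝ) (x : X), (a ⊔ b) x = max (a x) (b x) := by
      intro a b x
      rw [BoundedContinuousFunction.coe_sup]
      rfl
    have hgA : ∀ k, g k ∈ A := by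
      intro k
      induction k with
      | zero => exact hfA 0
      | succ k ih =>
        rw [hgsucc]
        exact hA.sup_mem ih (hfA (k + 1)) (fun x => hsup_apply _ _ x)
    have hg0 : ∀ k x, 0 ≤ g k x := by
      intro k
      induction k with
      | zero => exact hf0 0
      | succ k ih =>
        intro x
        rw [hgsucc, hsup_apply]
        exact le_max_of_le_left (ih x)
    have hgu : ∀ k x, g k x ≤ u x := by
      intro k
      induction k with
      | zero => exact hfu 0
      | succ k ih =>
        intro x
        rw [hgsucc, hsup_apply]
        exact max_le (ih x) (hfu (k + 1) x)
    have hgmono : ∀ x, Monotone fun k => g k x := by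
      intro x
      apply monotone_nat_of_le_succ
      intro k
      rw [hgsucc, hsup_apply]
      exact le_max_left _ _
    have hfg : ∀ n x, f n x ≤ g n x := by
      intro n x
      cases n with
      | zero => exact le_refl _
      | succ k =>
        rw [hgsucc, hsup_apply]
        exact le_max_right _ _
    refine ⟨g, hgA, hg0, hgmono, fun x => ?_⟩
    have hbdd : BddAbove (Set.range fun k => g k x) := by
      refine ⟨u x, ?_⟩
      rintro y ⟨k, rfl⟩
      exact hgu k x
    have htendsto := tendsto_atTop_ciSup (hgmono x) hbdd
    have heq : (⨆ k, g k x) = u x := by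
      apply le_antisymm
      · exact ciSup_le fun k => hgu k x
      · apply le_of_forall_lt
        intro c hc
        obtain ⟨n, hn⟩ := hfd x c hc
        exact lt_of_lt_of_le (hn.trans_le (hfg n x)) (le_ciSup hbdd n)
    rwa [heq] at htendsto

end AMPaper

end
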